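/- Let g : [a,b] × ℝ → ℝ be continuous, of linear growth (|g(t,y)| ≤ K(1+|y|)), and monotone decreasing in y (i.e. (y₁−y₂)(g(t,y₁)−g(t,y₂)) ≤ 0). Then the initial value problem z'(t)=g(t,z(t)), z(a)=η has a unique C¹ solution on [a,b]. -/

import Mathlib

set_option maxHeartbeats 1000000
open Set


/-- If `φ` is continuous on `[a,b]` and has derivative `≤ c` on the interior,
then `φ t ≤ φ a + c * (t - a)` on `[a,b]`. -/
lemma helper_le_add {a b : ℝ} (hab : a < b) {φ dφ : ℝ → ℝ} {c : ℝ}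
    (hφc : ContinuousOn φ (Icc a b))
    (hφ : ∀ t ∈ Ioo a b, HasDerivAt φ (dφ t) t)
    (hdφ : ∀ t ∈ Ioo a b, dφ t ≤ c) :
    ∀ t ∈ Icc a b, φ t ≤ φ a + c * (t - a) := by
  set ψ : ℝ → ℝ := fun t => φ t - c * t with hψ
  have hψd : ∀ t ∈ Ioo a b, HasDerivAt ψ (dφ t - c) t := by
    intro t ht
    have h1 : HasDerivAt (fun t : ℝ => c * t) c t := by
      simpa using (hasDerivAt_id t).const_mul c
    exact (hφ t ht).sub h1
  have hanti : AntitoneOn ψ (Icc a b) := by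
    apply antitoneOn_of_deriv_nonpos (convex_Icc a b)
    · exact hφc.sub (continuous_const.mul continuous_id).continuousOn
    · intro t ht
      rw [interior_Icc] at ht
      exact (hψd t ht).differentiableAt.differentiableWithinAt
    · intro t ht
      rw [interior_Icc] at ht
      rw [(hψd t ht).deriv]
      linarith [hdφ t ht]
  intro t ht
  have := hanti (left_mem_Icc.2 hab.le) ht ht.1
  simp only [hψ] at this
  linarith

/-- Key quadratic estimate for two curves with derivatives satisfying a product bound. -/
lemma helper_key {a b : ℝ} (hab : a < b) {u v du dv : ℝ → ℝ} {c : ℝ}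
    (hu : ∀ t ∈ Icc a b, HasDerivWithinAt u (du t) (Icc a b) t)
    (hv : ∀ t ∈ Icc a b, HasDerivWithinAt v (dv t) (Icc a b) t)
    (h0 : u a = v a)
    (hc : ∀ t ∈ Ioo a b, (u t - v t) * (du t - dv t) ≤ c) :
    ∀ t ∈ Icc a b, (u t - v t) ^ 2 ≤ 2 * c * (t - a) := by
  have hucont : ContinuousOn u (Icc a b) := fun x hx => (hu x hx).continuousWithinAt
  have hvcont : ContinuousOn v (Icc a b) := fun x hx => (hv x hx).continuousWithinAt
  have hφc : ContinuousOn (fun t => (u t - v t) ^ 2) (Icc a b) := (hucont.sub hvcont).pow 2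
  have hφ : ∀ t ∈ Ioo a b, HasDerivAt (fun t => (u t - v t) ^ 2)
      (2 * ((u t - v t) * (du t - dv t))) t := by
    intro t ht
    have hmem : Icc a b ∈ nhds t := Icc_mem_nhds ht.1 ht.2
    have h1 : HasDerivAt (fun t => u t - v t) (du t - dv t) t :=
      ((hu t (Ioo_subset_Icc_self ht)).hasDerivAt hmem).sub
        ((hv t (Ioo_subset_Icc_self ht)).hasDerivAt hmem)
    have : HasDerivAt (fun t => (u t - v t) ^ 2)
        (((2:ℕ):ℝ) * (u t - v t) ^ (2 - 1) * (du t - dv t)) t := h1.pow 2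
    convert this using 1
    ring
  have := helper_le_add hab (c := 2 * c) hφc hφ (fun t ht => by
    have := hc t ht
    nlinarith)
  intro t ht
  have h2 := this t ht
  rw [h0] at h2
  simpa using h2

lemma helper_gb_mono {δ K ε : ℝ} (hδ : 0 ≤ δ) (hK : 0 < K) (hε : 0 ≤ ε) {x y : ℝ}
    (hxy : x ≤ y) : gronwallBound δ K ε x ≤ gronwallBound δ K ε y := by
  simp only [gronwallBound_of_K_ne_0 hK.ne']
  have h : Real.exp (K * x) ≤ Real.exp (K * y) := Real.exp_le_exp.2 (by nlinarith)
  have h2 : 0 < Real.exp (K * x) := Real.exp_pos _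
  have h3 : 0 ≤ ε / K := div_nonneg hε hK.le
  nlinarith

/-- Existence and uniqueness of a C¹ solution of z' = g(t, z(t)), z(a) = η on [a,b],
under continuity, linear growth and monotonicity of g. -/
theorem stmt_0 (a b η K : ℝ) (hab : a < b) (hK : 0 < K)
    (g : ℝ → ℝ → ℝ)
    (hg_cont : ContinuousOn (fun p : ℝ × ℝ => g p.1 p.2) (Icc a b ×ˢ (univ : Set ℝ)))
    (hg_growth : ∀ t ∈ Icc a b, ∀ y : ℝ, |g t y| ≤ K * (1 + |y|))
    (hg_mono : ∀ t ∈ Icc a b, ∀ y₁ y₂ : ℝ, (y₁ - y₂) * (g t y₁ - g t y₂) ≤ 0) :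
    ∃ z : ℝ → ℝ, (ContDiffOn ℝ 1 z (Icc a b) ∧ z a = η ∧
        ∀ t ∈ Icc a b, HasDerivWithinAt z (g t (z t)) (Icc a b) t) ∧
      ∀ x : ℝ → ℝ, (ContDiffOn ℝ 1 x (Icc a b) ∧ x a = η ∧
        ∀ t ∈ Icc a b, HasDerivWithinAt x (g t (x t)) (Icc a b) t) →
        ∀ t ∈ Icc a b, x t = z t := by
  set B : ℝ := gronwallBound |η| K (2 * K) (b - a) with hBdef
  have hB0 : 0 ≤ B := by
    rw [hBdef, gronwallBound_of_K_ne_0 hK.ne']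
    have h1 : 1 ≤ Real.exp (K * (b - a)) := Real.one_le_exp (by nlinarith)
    have := abs_nonneg η
    have h3 : 0 ≤ 2 * K / K := by positivity
    nlinarith
  set M : ℝ := B + 1 with hMdef
  have hM1 : 1 ≤ M := by simp [hMdef]; linarith
  have hM0 : 0 < M := by linarith
  set cl : ℝ → ℝ := fun y => max (-M) (min M y) with hcl
  have hcl_eq : ∀ y : ℝ, |y| ≤ M → cl y = y := by
    intro y hy
    rw [abs_le] at hy
    simp [hcl, min_eq_right hy.2, max_eq_right hy.1]
  have hcl_bd : ∀ y : ℝ, |cl y| ≤ M := by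
    intro y
    rw [abs_le]
    constructor
    · exact le_max_left _ _
    · exact max_le (by linarith) (min_le_left _ _)
  have hcl_lip : ∀ y z : ℝ, |cl y - cl z| ≤ |y - z| := by
    intro y z
    have h1 : |max (-M) (min M y) - max (-M) (min M z)| ≤ |min M y - min M z| := by
      rw [max_comm (-M) (min M y), max_comm (-M) (min M z)]
      exact abs_max_sub_max_le_abs _ _ _
    refine h1.trans ?_
    have := abs_min_sub_min_le_max M y M z
    simpa using this
  have hcl_mono : Monotone cl := fun y z h => max_le_max le_rfl (min_le_min le_rfl h)
  have hcl_abs : ∀ y : ℝ, |cl y| ≤ |y| := by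
    intro y
    by_cases h : |y| ≤ M
    · rw [hcl_eq y h]
    · exact (hcl_bd y).trans (le_of_not_ge h)
  have hcl_cont : Continuous cl := by
    fun_prop
  -- truncated field
  set G : ℝ → ℝ → ℝ := fun t y => g t (cl y) with hG
  have hGcont : ContinuousOn (fun p : ℝ × ℝ => G p.1 p.2) (Icc a b ×ˢ (univ : Set ℝ)) := by
    have : (fun p : ℝ × ℝ => G p.1 p.2) =
        (fun p : ℝ × ℝ => g p.1 p.2) ∘ (fun p : ℝ × ℝ => (p.1, cl p.2)) := rfl
    rw [this]
    apply hg_cont.comp (Continuous.continuousOn (by fun_prop))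
    rintro ⟨t, y⟩ ⟨ht, -⟩
    exact ⟨ht, mem_univ _⟩
  have hGbd : ∀ t ∈ Icc a b, ∀ y : ℝ, |G t y| ≤ K * (1 + M) :=
    fun t ht y => (hg_growth t ht (cl y)).trans (by nlinarith [hcl_bd y, abs_nonneg (cl y)])
  have hGgrowth : ∀ t ∈ Icc a b, ∀ y : ℝ, |G t y| ≤ K * (1 + |y|) :=
    fun t ht y => (hg_growth t ht (cl y)).trans (by nlinarith [hcl_abs y, abs_nonneg y])
  have hGmono : ∀ t ∈ Icc a b, ∀ y₁ y₂ : ℝ, (y₁ - y₂) * (G t y₁ - G t y₂) ≤ 0 := by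
    have key : ∀ t ∈ Icc a b, ∀ y₁ y₂ : ℝ, y₁ ≤ y₂ → (y₁ - y₂) * (G t y₁ - G t y₂) ≤ 0 := by
      intro t ht y₁ y₂ h
      have hc : cl y₁ ≤ cl y₂ := hcl_mono h
      rcases eq_or_lt_of_le hc with he | hlt
      · have : G t y₁ - G t y₂ = 0 := by simp [hG, he]
        rw [this, mul_zero]
      · have hmm := hg_mono t ht (cl y₁) (cl y₂)
        have hΔ : 0 ≤ g t (cl y₁) - g t (cl y₂) := by
          by_contra hn
          push_neg at hn
          nlinarith
        exact mul_nonpos_of_nonpos_of_nonneg (by linarith) hΔ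
    intro t ht y₁ y₂
    rcases le_total y₁ y₂ with h | h
    · exact key t ht y₁ y₂ h
    · have := key t ht y₂ y₁ h
      nlinarith
  -- uniform continuity of G
  have hGuc : ∀ δ : ℝ, 0 < δ → ∃ ζ : ℝ, 0 < ζ ∧ ∀ t ∈ Icc a b, ∀ s ∈ Icc a b, ∀ y y' : ℝ,
      |t - s| ≤ ζ → |y - y'| ≤ ζ → |G t y - G s y'| ≤ δ := by
    intro δ hδ
    have hcomp : IsCompact (Icc a b ×ˢ Icc (-M) M) := (isCompact_Icc).prod isCompact_Icc
    have hsub : (Icc a b ×ˢ Icc (-M) M) ⊆ Icc a b ×ˢ (univ : Set ℝ) :=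
      prod_mono_right (subset_univ _)
    have huc := hcomp.uniformContinuousOn_of_continuous (hg_cont.mono hsub)
    rw [Metric.uniformContinuousOn_iff_le] at huc
    obtain ⟨ζ, hζ, hζ'⟩ := huc δ hδ
    refine ⟨ζ, hζ, fun t ht s hs y y' h1 h2 => ?_⟩
    have hmem : ∀ u : ℝ, (cl u) ∈ Icc (-M) M := fun u =>
      ⟨(abs_le.1 (hcl_bd u)).1, (abs_le.1 (hcl_bd u)).2⟩
    have hkey := hζ' (t, cl y) ⟨ht, hmem y⟩ (s, cl y') ⟨hs, hmem y'⟩ (by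
      rw [Prod.dist_eq]
      apply max_le
      · rwa [Real.dist_eq]
      · rw [Real.dist_eq]
        exact (hcl_lip y y').trans h2)
    simpa [Real.dist_eq, hG] using hkey
  have hGslice : ∀ t ∈ Icc a b, Continuous (fun y => G t y) := by
    intro t ht
    rw [← continuousOn_univ]
    have heq : (fun y => G t y) = (fun p : ℝ × ℝ => G p.1 p.2) ∘ (fun y => (t, y)) := rfl
    rw [heq]
    exact hGcont.comp (Continuous.continuousOn (by fun_prop))
      (fun y _ => ⟨ht, mem_univ _⟩)
  have hGint : ∀ t ∈ Icc a b, ∀ y₁ y₂ : ℝ, IntervalIntegrable (fun u => G t u)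
      MeasureTheory.volume y₁ y₂ := fun t ht y₁ y₂ => (hGslice t ht).intervalIntegrable _ _
  set C₀ : ℝ := K * (1 + M) with hC0def
  have hC0 : 0 < C₀ := by rw [hC0def]; nlinarith
  set vf : ℝ → ℝ → ℝ → ℝ := fun ε t y => ε⁻¹ * ∫ u in y..(y + ε), G t u with hvf
  -- uniform bound
  have habs_mem : ∀ ε : ℝ, 0 < ε → ∀ y u : ℝ, u ∈ uIoc y (y + ε) → |u| ≤ |y| + ε := by
    intro ε hε y u hu
    rw [uIoc_of_le (by linarith)] at hu
    rw [abs_le]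
    constructor
    · have := neg_abs_le y; linarith [hu.1]
    · have := le_abs_self y; linarith [hu.2]
  have hvf_bd : ∀ ε : ℝ, 0 < ε → ∀ t ∈ Icc a b, ∀ y : ℝ, |vf ε t y| ≤ C₀ := by
    intro ε hε t ht y
    have h1 : ‖∫ u in y..(y + ε), G t u‖ ≤ C₀ * |y + ε - y| :=
      intervalIntegral.norm_integral_le_of_norm_le_const (fun u _ => by
        rw [Real.norm_eq_abs]; exact hGbd t ht u)
    rw [Real.norm_eq_abs] at h1
    have h2 : |y + ε - y| = ε := by rw [show y + ε - y = ε by ring, abs_of_pos hε]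
    rw [h2] at h1
    rw [hvf]
    simp only [abs_mul, abs_inv, abs_of_pos hε]
    rw [inv_mul_le_iff₀ hε]
    calc |∫ u in y..(y + ε), G t u| ≤ C₀ * ε := h1
      _ = ε * C₀ := mul_comm _ _
  have hvf_growth : ∀ ε : ℝ, 0 < ε → ε ≤ 1 → ∀ t ∈ Icc a b, ∀ y : ℝ,
      |vf ε t y| ≤ K * |y| + 2 * K := by
    intro ε hε hε1 t ht y
    have h1 : ‖∫ u in y..(y + ε), G t u‖ ≤ (K * |y| + 2 * K) * |y + ε - y| :=
      intervalIntegral.norm_integral_le_of_norm_le_const (fun u hu => by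
        rw [Real.norm_eq_abs]
        have h2 := hGgrowth t ht u
        have h3 := habs_mem ε hε y u hu
        nlinarith)
    rw [Real.norm_eq_abs] at h1
    have h2 : |y + ε - y| = ε := by rw [show y + ε - y = ε by ring, abs_of_pos hε]
    rw [h2] at h1
    rw [hvf]
    simp only [abs_mul, abs_inv, abs_of_pos hε]
    rw [inv_mul_le_iff₀ hε]
    calc |∫ u in y..(y + ε), G t u| ≤ (K * |y| + 2 * K) * ε := h1
      _ = ε * (K * |y| + 2 * K) := mul_comm _ _
  have hvf_lip : ∀ ε : ℝ, 0 < ε → ∀ t ∈ Icc a b, ∀ y₁ y₂ : ℝ,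
      |vf ε t y₁ - vf ε t y₂| ≤ (2 * C₀ / ε) * |y₁ - y₂| := by
    intro ε hε t ht y₁ y₂
    have key : ∫ u in y₁..(y₁ + ε), G t u =
        (∫ u in y₁..y₂, G t u) + ((∫ u in y₂..(y₂ + ε), G t u) +
          (∫ u in (y₂ + ε)..(y₁ + ε), G t u)) := by
      rw [intervalIntegral.integral_add_adjacent_intervals (hGint t ht _ _) (hGint t ht _ _),
        intervalIntegral.integral_add_adjacent_intervals (hGint t ht _ _) (hGint t ht _ _)]
    have hb1 : |∫ u in y₁..y₂, G t u| ≤ C₀ * |y₂ - y₁| := by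
      have := intervalIntegral.norm_integral_le_of_norm_le_const
        (C := C₀) (f := fun u => G t u) (a := y₁) (b := y₂) (fun u _ => by
          rw [Real.norm_eq_abs]; exact hGbd t ht u)
      rwa [Real.norm_eq_abs] at this
    have hb2 : |∫ u in (y₂ + ε)..(y₁ + ε), G t u| ≤ C₀ * |y₁ + ε - (y₂ + ε)| := by
      have := intervalIntegral.norm_integral_le_of_norm_le_const
        (C := C₀) (f := fun u => G t u) (a := y₂ + ε) (b := y₁ + ε) (fun u _ => by
          rw [Real.norm_eq_abs]; exact hGbd t ht u)
      rwa [Real.norm_eq_abs] at this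
    have hdiff : vf ε t y₁ - vf ε t y₂ = ε⁻¹ * ((∫ u in y₁..y₂, G t u) +
        (∫ u in (y₂ + ε)..(y₁ + ε), G t u)) := by
      rw [hvf]
      simp only
      rw [key]
      ring
    rw [hdiff, abs_mul, abs_inv, abs_of_pos hε]
    have h5 : |y₁ + ε - (y₂ + ε)| = |y₁ - y₂| := by rw [show y₁ + ε - (y₂ + ε) = y₁ - y₂ by ring]
    have h6 : |y₂ - y₁| = |y₁ - y₂| := abs_sub_comm _ _
    rw [h5] at hb2; rw [h6] at hb1
    have h7 := abs_add_le (∫ u in y₁..y₂, G t u) (∫ u in (y₂ + ε)..(y₁ + ε), G t u)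
    rw [div_mul_eq_mul_div, ← inv_mul_eq_div]  -- (2C₀/ε)*d = ε⁻¹ * (2C₀*d)
    apply mul_le_mul_of_nonneg_left _ (by positivity)
    linarith
  have hvf_tcont : ∀ ε : ℝ, 0 < ε → ∀ y : ℝ, ContinuousOn (fun t => vf ε t y) (Icc a b) := by
    intro ε hε y
    rw [Metric.continuousOn_iff]
    intro t ht θ hθ
    obtain ⟨ζ, hζ, hζ'⟩ := hGuc (θ / 2) (by linarith)
    refine ⟨ζ, hζ, fun s hs hds => ?_⟩
    rw [Real.dist_eq] at hds ⊢
    have hsub : (∫ u in y..(y + ε), G s u) - (∫ u in y..(y + ε), G t u) =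
        ∫ u in y..(y + ε), (G s u - G t u) :=
      (intervalIntegral.integral_sub (hGint s hs _ _) (hGint t ht _ _)).symm
    have hbound : |∫ u in y..(y + ε), (G s u - G t u)| ≤ (θ / 2) * |y + ε - y| := by
      have := intervalIntegral.norm_integral_le_of_norm_le_const
        (C := θ / 2) (f := fun u => G s u - G t u) (a := y) (b := y + ε) (fun u _ => by
          rw [Real.norm_eq_abs]
          exact hζ' s hs t ht u u (le_of_lt hds) (by simp [hζ.le]))
      rwa [Real.norm_eq_abs] at this
    have h2 : |y + ε - y| = ε := by rw [show y + ε - y = ε by ring, abs_of_pos hε]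
    rw [h2] at hbound
    have : |vf ε s y - vf ε t y| ≤ θ / 2 := by
      rw [hvf]
      simp only
      rw [show ε⁻¹ * (∫ u in y..(y + ε), G s u) - ε⁻¹ * (∫ u in y..(y + ε), G t u)
        = ε⁻¹ * ((∫ u in y..(y + ε), G s u) - (∫ u in y..(y + ε), G t u)) by ring, hsub]
      rw [abs_mul, abs_inv, abs_of_pos hε, inv_mul_le_iff₀ hε]
      calc |∫ u in y..(y + ε), (G s u - G t u)| ≤ θ / 2 * ε := hbound
        _ = ε * (θ / 2) := mul_comm _ _
    linarith
  have hvf_close : ∀ δ : ℝ, 0 < δ → ∃ ζ : ℝ, 0 < ζ ∧ ∀ ε : ℝ, 0 < ε → ε ≤ ζ →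
      ∀ t ∈ Icc a b, ∀ y : ℝ, |vf ε t y - G t y| ≤ δ := by
    intro δ hδ
    obtain ⟨ζ, hζ, hζ'⟩ := hGuc δ hδ
    refine ⟨ζ, hζ, fun ε hε hεζ t ht y => ?_⟩
    have hconst : (∫ _u in y..(y + ε), G t y) = ε * G t y := by
      rw [intervalIntegral.integral_const]
      simp [smul_eq_mul]
    have hdiff : vf ε t y - G t y = ε⁻¹ * ∫ u in y..(y + ε), (G t u - G t y) := by
      rw [intervalIntegral.integral_sub (hGint t ht _ _)
        (intervalIntegrable_const), hconst, hvf]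
      simp only
      field_simp
    have hbound : |∫ u in y..(y + ε), (G t u - G t y)| ≤ δ * |y + ε - y| := by
      have := intervalIntegral.norm_integral_le_of_norm_le_const
        (C := δ) (f := fun u => G t u - G t y) (a := y) (b := y + ε) (fun u hu => by
          rw [Real.norm_eq_abs]
          refine hζ' t ht t ht u y (by simp [hζ.le]) ?_
          rw [uIoc_of_le (by linarith)] at hu
          rw [abs_le]
          constructor <;> [linarith [hu.1.le]; linarith [hu.2]])
      rwa [Real.norm_eq_abs] at this
    have h2 : |y + ε - y| = ε := by rw [show y + ε - y = ε by ring, abs_of_pos hε]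
    rw [h2] at hbound
    rw [hdiff, abs_mul, abs_inv, abs_of_pos hε, inv_mul_le_iff₀ hε]
    calc |∫ u in y..(y + ε), (G t u - G t y)| ≤ δ * ε := hbound
      _ = ε * δ := mul_comm _ _
  -- Picard-Lindelöf for the regularized field
  have hexist : ∀ ε : ℝ, 0 < ε → ∃ f : ℝ → ℝ, f a = η ∧
      ∀ t ∈ Icc a b, HasDerivWithinAt f (vf ε t (f t)) (Icc a b) t := by
    intro ε hε
    have hL : (0:ℝ) ≤ 2 * C₀ / ε := by positivity
    have hpl : IsPicardLindelof (fun t y => vf ε t y) (tmin := a) (tmax := b)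
        ⟨a, left_mem_Icc.2 hab.le⟩ η (Real.toNNReal (C₀ * (b - a))) 0 (Real.toNNReal C₀)
        (Real.toNNReal (2 * C₀ / ε)) := by
      constructor
      · intro t ht
        apply LipschitzWith.lipschitzOnWith
        apply LipschitzWith.of_dist_le_mul
        intro y₁ y₂
        rw [Real.dist_eq, Real.dist_eq, Real.coe_toNNReal _ hL]
        exact hvf_lip ε hε t ht y₁ y₂
      · intro y _
        exact hvf_tcont ε hε y
      · intro t ht y _
        rw [Real.norm_eq_abs, Real.coe_toNNReal _ hC0.le]
        exact hvf_bd ε hε t ht y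
      · norm_num [Real.coe_toNNReal _ hC0.le,
          Real.coe_toNNReal _ (mul_nonneg hC0.le (by linarith : (0:ℝ) ≤ b - a)),
          max_eq_left (by linarith : a - a ≤ b - a)]
        rw [max_eq_left (by linarith : (0:ℝ) ≤ b - a)]
    exact hpl.exists_eq_forall_mem_Icc_hasDerivWithinAt₀
  set εn : ℕ → ℝ := fun n => 1 / (n + 1 : ℝ) with hεn
  have hεn_pos : ∀ n : ℕ, 0 < εn n := fun n => by positivity
  have hεn_le1 : ∀ n : ℕ, εn n ≤ 1 := by
    intro n
    rw [hεn]
    simp only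
    rw [div_le_one (by positivity)]
    linarith [Nat.cast_nonneg (α := ℝ) n]
  have hεn_to0 : ∀ ζ : ℝ, 0 < ζ → ∃ N : ℕ, ∀ n ≥ N, εn n ≤ ζ := by
    intro ζ hζ
    obtain ⟨N, hN⟩ := exists_nat_gt (1 / ζ)
    refine ⟨N, fun n hn => ?_⟩
    rw [hεn]
    simp only
    rw [div_le_iff₀ (by positivity)]
    have h1 : (1:ℝ) / ζ < N := hN
    have h2 : (N:ℝ) ≤ n := Nat.cast_le.2 hn
    rw [div_lt_iff₀ hζ] at h1
    nlinarith
  set Z : ℕ → ℝ → ℝ := fun n => (hexist (εn n) (hεn_pos n)).choose with hZ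
  have hZ0 : ∀ n : ℕ, Z n a = η := fun n => (hexist (εn n) (hεn_pos n)).choose_spec.1
  have hZd : ∀ n : ℕ, ∀ t ∈ Icc a b,
      HasDerivWithinAt (Z n) (vf (εn n) t (Z n t)) (Icc a b) t :=
    fun n => (hexist (εn n) (hεn_pos n)).choose_spec.2
  have hZcont : ∀ n : ℕ, ContinuousOn (Z n) (Icc a b) :=
    fun n t ht => (hZd n t ht).continuousWithinAt
  -- Grönwall a priori bound
  have hZbd : ∀ n : ℕ, ∀ t ∈ Icc a b, |Z n t| ≤ B := by
    intro n t ht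
    have hder : ∀ x ∈ Ico a b, HasDerivWithinAt (Z n) (vf (εn n) x (Z n x)) (Ici x) x :=
      fun x hx => (hZd n x (Ico_subset_Icc_self hx)).mono_of_mem_nhdsWithin
        (Icc_mem_nhdsGE_of_mem hx)
    have hbound : ∀ x ∈ Ico a b, ‖vf (εn n) x (Z n x)‖ ≤ K * ‖Z n x‖ + 2 * K := by
      intro x hx
      rw [Real.norm_eq_abs, Real.norm_eq_abs]
      exact hvf_growth (εn n) (hεn_pos n) (hεn_le1 n) x (Ico_subset_Icc_self hx) (Z n x)
    have := norm_le_gronwallBound_of_norm_deriv_right_le (hZcont n) hder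
      (by rw [hZ0 n, Real.norm_eq_abs]) hbound t ht
    rw [Real.norm_eq_abs] at this
    refine this.trans ?_
    rw [hBdef]
    exact helper_gb_mono (abs_nonneg η) hK (by linarith) (by linarith [ht.2])
  -- uniform Cauchy estimate
  have hCauchy : ∀ δ : ℝ, 0 < δ → ∃ N : ℕ, ∀ n ≥ N, ∀ m ≥ N, ∀ t ∈ Icc a b,
      |Z n t - Z m t| ≤ δ := by
    intro δ hδ
    set δ' : ℝ := δ ^ 2 / (16 * (B + 1) * (b - a)) with hδ'def
    have hδ' : 0 < δ' := by
      rw [hδ'def]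
      have h1 : 0 < b - a := by linarith
      have h2 : 0 < B + 1 := by linarith
      positivity
    obtain ⟨ζ, hζ, hclose⟩ := hvf_close δ' hδ'
    obtain ⟨N, hN⟩ := hεn_to0 ζ hζ
    refine ⟨N, fun n hn m hm t ht => ?_⟩
    have hc : ∀ s ∈ Ioo a b, (Z n s - Z m s) *
        (vf (εn n) s (Z n s) - vf (εn m) s (Z m s)) ≤ 4 * (B + 1) * δ' := by
      intro s hs
      have hsI : s ∈ Icc a b := Ioo_subset_Icc_self hs
      have h1 : |vf (εn n) s (Z n s) - G s (Z n s)| ≤ δ' :=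
        hclose (εn n) (hεn_pos n) (hN n hn) s hsI _
      have h2 : |vf (εn m) s (Z m s) - G s (Z m s)| ≤ δ' :=
        hclose (εn m) (hεn_pos m) (hN m hm) s hsI _
      have h3 : (Z n s - Z m s) * (G s (Z n s) - G s (Z m s)) ≤ 0 :=
        hGmono s hsI _ _
      have hp : |Z n s - Z m s| ≤ 2 * (B + 1) := by
        have ha1 := hZbd n s hsI
        have ha2 := hZbd m s hsI
        have := abs_sub (Z n s) (Z m s)
        linarith
      have e1 : (Z n s - Z m s) * (vf (εn n) s (Z n s) - G s (Z n s)) ≤ 2 * (B + 1) * δ' :=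
        (le_abs_self _).trans (by
          rw [abs_mul]
          exact mul_le_mul hp h1 (abs_nonneg _) (by linarith))
      have e2 : (Z n s - Z m s) * (G s (Z m s) - vf (εn m) s (Z m s)) ≤ 2 * (B + 1) * δ' :=
        (le_abs_self _).trans (by
          rw [abs_mul, abs_sub_comm (G s (Z m s))]
          exact mul_le_mul hp h2 (abs_nonneg _) (by linarith))
      nlinarith [e1, e2, h3]
    have hkey := helper_key hab (hZd n) (hZd m) (by rw [hZ0 n, hZ0 m]) hc t ht
    have heq : 2 * (4 * (B + 1) * δ') * (b - a) = δ ^ 2 / 2 := by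
      have hne1 : (B + 1) ≠ 0 := by linarith
      have hne2 : (b - a) ≠ 0 := by linarith
      rw [hδ'def]
      field_simp
      ring
    have hsq : (Z n t - Z m t) ^ 2 ≤ δ ^ 2 := by
      have h4 : 2 * (4 * (B + 1) * δ') * (t - a) ≤ 2 * (4 * (B + 1) * δ') * (b - a) := by
        apply mul_le_mul_of_nonneg_left (by linarith [ht.2])
        have : 0 < B + 1 := by linarith
        positivity
      nlinarith
    calc |Z n t - Z m t| = Real.sqrt ((Z n t - Z m t) ^ 2) := (Real.sqrt_sq_eq_abs _).symm
      _ ≤ Real.sqrt (δ ^ 2) := Real.sqrt_le_sqrt hsq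
      _ = δ := by rw [Real.sqrt_sq hδ.le]
  -- pointwise limit
  have hZt_cauchy : ∀ t, t ∈ Icc a b → ∃ l : ℝ, Filter.Tendsto (fun n => Z n t)
      Filter.atTop (nhds l) := by
    intro t ht
    apply cauchySeq_tendsto_of_complete
    rw [Metric.cauchySeq_iff]
    intro δ hδ
    obtain ⟨N, hN⟩ := hCauchy (δ / 2) (by linarith)
    exact ⟨N, fun m hm n hn => by
      rw [Real.dist_eq]
      exact lt_of_le_of_lt (hN m hm n hn t ht) (by linarith)⟩
  set z : ℝ → ℝ := fun t => if h : t ∈ Icc a b then (hZt_cauchy t h).choose else η with hz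
  have hzt : ∀ t ∈ Icc a b, Filter.Tendsto (fun n => Z n t) Filter.atTop (nhds (z t)) := by
    intro t ht
    have : z t = (hZt_cauchy t ht).choose := by rw [hz]; simp only [dif_pos ht]
    rw [this]
    exact (hZt_cauchy t ht).choose_spec
  have hz0 : z a = η := by
    have h1 := hzt a (left_mem_Icc.2 hab.le)
    have h2 : (fun n => Z n a) = fun _ => η := funext hZ0
    rw [h2] at h1
    exact tendsto_nhds_unique h1 tendsto_const_nhds
  have hzbd : ∀ t ∈ Icc a b, |z t| ≤ B := fun t ht =>
    le_of_tendsto (hzt t ht).abs (Filter.Eventually.of_forall fun n => hZbd n t ht)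
  have hZz : ∀ δ : ℝ, 0 < δ → ∃ N : ℕ, ∀ n ≥ N, ∀ t ∈ Icc a b, |Z n t - z t| ≤ δ := by
    intro δ hδ
    obtain ⟨N, hN⟩ := hCauchy δ hδ
    refine ⟨N, fun n hn t ht => ?_⟩
    have h1 : Filter.Tendsto (fun m => |Z n t - Z m t|) Filter.atTop (nhds |Z n t - z t|) :=
      (tendsto_const_nhds.sub (hzt t ht)).abs
    exact le_of_tendsto h1 (Filter.eventually_atTop.2 ⟨N, fun m hm => hN n hn m hm t ht⟩)
  have hzcont : ContinuousOn z (Icc a b) := by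
    have hunif : TendstoUniformlyOn Z z Filter.atTop (Icc a b) := by
      rw [Metric.tendstoUniformlyOn_iff]
      intro δ hδ
      obtain ⟨N, hN⟩ := hZz (δ / 2) (by linarith)
      filter_upwards [Filter.eventually_ge_atTop N] with n hn
      intro t ht
      rw [Real.dist_eq, abs_sub_comm]
      exact lt_of_le_of_lt (hN n hn t ht) (by linarith)
    exact hunif.continuousOn (Filter.Eventually.of_forall hZcont).frequently
  -- joint continuity of the regularized field
  have hvf_joint : ∀ ε : ℝ, 0 < ε →
      ContinuousOn (fun p : ℝ × ℝ => vf ε p.2 p.1) ((univ : Set ℝ) ×ˢ Icc a b) := by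
    intro ε hε
    apply continuousOn_prod_of_continuousOn_lipschitzOnWith _ (Real.toNNReal (2 * C₀ / ε))
    · intro y _
      exact hvf_tcont ε hε y
    · intro t ht
      apply LipschitzWith.lipschitzOnWith
      apply LipschitzWith.of_dist_le_mul
      intro y₁ y₂
      rw [Real.dist_eq, Real.dist_eq, Real.coe_toNNReal _ (by positivity)]
      exact hvf_lip ε hε t ht y₁ y₂
  have hvfZ : ∀ n : ℕ, ContinuousOn (fun s => vf (εn n) s (Z n s)) (Icc a b) := by
    intro n
    have heq : (fun s => vf (εn n) s (Z n s)) =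
        (fun p : ℝ × ℝ => vf (εn n) p.2 p.1) ∘ (fun s => (Z n s, s)) := rfl
    rw [heq]
    exact (hvf_joint (εn n) (hεn_pos n)).comp ((hZcont n).prodMk continuousOn_id)
      (fun s hs => ⟨mem_univ _, hs⟩)
  -- integral equation for each approximation
  have hZint : ∀ n : ℕ, ∀ t ∈ Icc a b, Z n t = η + ∫ s in a..t, vf (εn n) s (Z n s) := by
    intro n t ht
    rcases eq_or_lt_of_le ht.1 with he | hlt
    · rw [← he]
      simp [hZ0 n]
    · have hicc : Icc a t ⊆ Icc a b := Icc_subset_Icc le_rfl ht.2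
      have h1 := intervalIntegral.integral_eq_sub_of_hasDeriv_right_of_le hlt.le
        ((hZcont n).mono hicc)
        (fun x hx => (hZd n x ⟨hx.1.le, hx.2.le.trans ht.2⟩).mono_of_mem_nhdsWithin
          (Icc_mem_nhdsGT_of_mem ⟨hx.1.le, lt_of_lt_of_le hx.2 ht.2⟩))
        ((by rw [uIcc_of_le hlt.le]; exact (hvfZ n).mono hicc :
          ContinuousOn (fun s => vf (εn n) s (Z n s)) (uIcc a t)).intervalIntegrable)
      rw [hZ0 n] at h1
      linarith
  -- continuity of the limit integrand
  have hGz_cont : ContinuousOn (fun s => G s (z s)) (Icc a b) := by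
    have heq : (fun s => G s (z s)) =
        (fun p : ℝ × ℝ => G p.1 p.2) ∘ (fun s => (s, z s)) := rfl
    rw [heq]
    exact hGcont.comp (continuousOn_id.prodMk hzcont) (fun s hs => ⟨hs, mem_univ _⟩)
  -- limit integral equation
  have hzint : ∀ t ∈ Icc a b, z t = η + ∫ s in a..t, G s (z s) := by
    intro t ht
    have hicc : Icc a t ⊆ Icc a b := Icc_subset_Icc le_rfl ht.2
    have htend : Filter.Tendsto (fun n => η + ∫ s in a..t, vf (εn n) s (Z n s))
        Filter.atTop (nhds (η + ∫ s in a..t, G s (z s))) := by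
      rw [Metric.tendsto_atTop]
      intro θ hθ
      have hδpos : 0 < θ / (4 * (b - a) + 4) := by
        have : 0 < b - a := by linarith
        positivity
      obtain ⟨ζ₁, hζ₁, hcl1⟩ := hvf_close (θ / (4 * (b - a) + 4)) hδpos
      obtain ⟨ζ₂, hζ₂, hG2⟩ := hGuc (θ / (4 * (b - a) + 4)) hδpos
      obtain ⟨N₁, hN₁⟩ := hεn_to0 ζ₁ hζ₁
      obtain ⟨N₂, hN₂⟩ := hZz ζ₂ hζ₂
      refine ⟨max N₁ N₂, fun n hn => ?_⟩
      rw [Real.dist_eq]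
      have hsub : (η + ∫ s in a..t, vf (εn n) s (Z n s)) - (η + ∫ s in a..t, G s (z s)) =
          ∫ s in a..t, (vf (εn n) s (Z n s) - G s (z s)) := by
        rw [intervalIntegral.integral_sub
          ((by rw [uIcc_of_le ht.1]; exact (hvfZ n).mono hicc :
            ContinuousOn (fun s => vf (εn n) s (Z n s)) (uIcc a t)).intervalIntegrable)
          ((by rw [uIcc_of_le ht.1]; exact hGz_cont.mono hicc :
            ContinuousOn (fun s => G s (z s)) (uIcc a t)).intervalIntegrable)]
        ring
      rw [hsub]
      have hbd : ∀ s ∈ uIoc a t, ‖vf (εn n) s (Z n s) - G s (z s)‖ ≤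
          2 * (θ / (4 * (b - a) + 4)) := by
        intro s hs
        rw [uIoc_of_le ht.1] at hs
        have hsI : s ∈ Icc a b := ⟨hs.1.le, hs.2.trans ht.2⟩
        have e1 : |vf (εn n) s (Z n s) - G s (Z n s)| ≤ θ / (4 * (b - a) + 4) :=
          hcl1 (εn n) (hεn_pos n) (hN₁ n (le_of_max_le_left hn)) s hsI _
        have e2 : |G s (Z n s) - G s (z s)| ≤ θ / (4 * (b - a) + 4) :=
          hG2 s hsI s hsI _ _ (by simp [hζ₂.le]) (hN₂ n (le_of_max_le_right hn) s hsI)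
        rw [Real.norm_eq_abs]
        calc |vf (εn n) s (Z n s) - G s (z s)| ≤
            |vf (εn n) s (Z n s) - G s (Z n s)| + |G s (Z n s) - G s (z s)| := by
              have := abs_add_le (vf (εn n) s (Z n s) - G s (Z n s)) (G s (Z n s) - G s (z s))
              simpa using this
          _ ≤ 2 * (θ / (4 * (b - a) + 4)) := by linarith
      have h2 := intervalIntegral.norm_integral_le_of_norm_le_const hbd
      rw [Real.norm_eq_abs] at h2
      have h3 : |t - a| ≤ b - a := by
        rw [abs_of_nonneg (by linarith [ht.1])]
        linarith [ht.2]
      have h4 : 0 ≤ θ / (4 * (b - a) + 4) := hδpos.le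
      calc |∫ s in a..t, (vf (εn n) s (Z n s) - G s (z s))| ≤
          2 * (θ / (4 * (b - a) + 4)) * |t - a| := h2
        _ ≤ 2 * (θ / (4 * (b - a) + 4)) * (b - a) := by nlinarith
        _ < θ := by
            have hd : 0 < 4 * (b - a) + 4 := by nlinarith
            have h5 : θ / (4 * (b - a) + 4) * (4 * (b - a) + 4) = θ :=
              div_mul_cancel₀ θ hd.ne'
            nlinarith [mul_pos hδpos (show (0:ℝ) < 2 * (b - a) + 4 by nlinarith)]
    have hlhs : Filter.Tendsto (fun n => η + ∫ s in a..t, vf (εn n) s (Z n s))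
        Filter.atTop (nhds (z t)) := by
      have heq2 : (fun n => η + ∫ s in a..t, vf (εn n) s (Z n s)) = fun n => Z n t :=
        funext fun n => (hZint n t ht).symm
      rw [heq2]
      exact hzt t ht
    exact tendsto_nhds_unique hlhs htend
  -- derivative of the limit
  have hzd : ∀ t ∈ Icc a b, HasDerivWithinAt z (G t (z t)) (Icc a b) t := by
    intro t ht
    haveI : Fact (t ∈ Icc a b) := ⟨ht⟩
    have hint : IntervalIntegrable (fun s => G s (z s)) MeasureTheory.volume a t :=
      ((by rw [uIcc_of_le ht.1]; exact hGz_cont.mono (Icc_subset_Icc le_rfl ht.2) :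
        ContinuousOn (fun s => G s (z s)) (uIcc a t)).intervalIntegrable)
    have hmeas : StronglyMeasurableAtFilter (fun s => G s (z s)) (nhdsWithin t (Icc a b))
        MeasureTheory.volume :=
      hGz_cont.stronglyMeasurableAtFilter_nhdsWithin measurableSet_Icc t
    have hcw : ContinuousWithinAt (fun s => G s (z s)) (Icc a b) t := hGz_cont t ht
    have hF := (intervalIntegral.integral_hasDerivWithinAt_right (s := Icc a b) (t := Icc a b) hint hmeas hcw).const_add η
    exact hF.congr (fun u hu => hzint u hu) (hzint t ht)
  have hclz : ∀ t ∈ Icc a b, G t (z t) = g t (z t) := by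
    intro t ht
    have h1 : |z t| ≤ M := (hzbd t ht).trans (by rw [hMdef]; linarith)
    simp only [hG]
    rw [hcl_eq _ h1]
  have hzd' : ∀ t ∈ Icc a b, HasDerivWithinAt z (g t (z t)) (Icc a b) t := by
    intro t ht
    have := hzd t ht
    rwa [hclz t ht] at this
  -- C¹ regularity
  have hud : UniqueDiffOn ℝ (Icc a b) := uniqueDiffOn_Icc hab
  have hzC1 : ContDiffOn ℝ 1 z (Icc a b) := by
    rw [show (1 : WithTop ℕ∞) = 0 + 1 from (zero_add 1).symm,
      contDiffOn_succ_iff_derivWithin hud]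
    refine ⟨fun t ht => ((hzd t ht).differentiableWithinAt), by simp, ?_⟩
    rw [contDiffOn_zero]
    apply hGz_cont.congr
    intro t ht
    exact (hzd t ht).derivWithin (hud t ht)
  refine ⟨z, ⟨hzC1, hz0, hzd'⟩, ?_⟩
  -- uniqueness
  rintro x ⟨-, hx0, hxd⟩ t ht
  have hc : ∀ s ∈ Ioo a b, (x s - z s) * (g s (x s) - g s (z s)) ≤ 0 :=
    fun s hs => hg_mono s (Ioo_subset_Icc_self hs) _ _
  have hkey := helper_key hab hxd hzd' (by rw [hx0, hz0]) hc t ht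
  have hsq : (x t - z t) ^ 2 = 0 := le_antisymm (by nlinarith) (sq_nonneg _)
  have := pow_eq_zero_iff (n := 2) (by norm_num) |>.1 hsq
  linarith [this]
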